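/- arXiv:2406.02129 — 5 statements merged into one kernel-verified Lean document; each statement's English description precedes it below -/
import Mathlib

section
/- Let X be a Banach space and α > 0. Then every slice of the closed unit ball B_X has diameter at least α if and only if for every ε > 0 one has B_X = closure(conv({(x+y)/2 : x, y ∈ B_X, ‖x−y‖ ≥ α−ε})). -/
open Metric Set

/-- The set of midpoints `(x+y)/2` of points of the closed unit ball with `‖x-y‖ ≥ α`. -/
def midSet (X : Type*) [NormedAddCommGroup X] [NormedSpace ℝ X] (α : ℝ) : Set X :=
  {z | ∃ x ∈ Metric.closedBall (0:X) 1, ∃ y ∈ Metric.closedBall (0:X) 1,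
    α ≤ ‖x - y‖ ∧ z = (2:ℝ)⁻¹ • (x + y)}

/-- The slice of the closed unit ball given by `f ∈ X*` and `β > 0`. -/
def ballSlice {X : Type*} [NormedAddCommGroup X] [NormedSpace ℝ X]
    (f : X →L[ℝ] ℝ) (β : ℝ) : Set X :=
  {x ∈ Metric.closedBall (0:X) 1 | sSup (f '' Metric.closedBall (0:X) 1) - β < f x}

lemma midSet_subset_ball (X : Type*) [NormedAddCommGroup X] [NormedSpace ℝ X] (α : ℝ) :
    midSet X α ⊆ Metric.closedBall (0:X) 1 := by
  rintro z ⟨x, hx, y, hy, -, rfl⟩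
  rw [mem_closedBall_zero_iff] at *
  calc ‖(2:ℝ)⁻¹ • (x + y)‖ = 2⁻¹ * ‖x + y‖ := by rw [norm_smul]; norm_num
    _ ≤ 2⁻¹ * (‖x‖ + ‖y‖) := by
        have := norm_add_le x y
        nlinarith
    _ ≤ 1 := by nlinarith

lemma bddAbove_image_ball {X : Type*} [NormedAddCommGroup X] [NormedSpace ℝ X]
    (f : X →L[ℝ] ℝ) : BddAbove (f '' Metric.closedBall (0:X) 1) := by
  refine ⟨‖f‖, ?_⟩
  rintro _ ⟨x, hx, rfl⟩
  rw [mem_closedBall, dist_zero_right] at hx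
  calc f x ≤ ‖f x‖ := le_abs_self _
    _ ≤ ‖f‖ * ‖x‖ := f.le_opNorm x
    _ ≤ ‖f‖ * 1 := by
        have := norm_nonneg f
        nlinarith
    _ = ‖f‖ := mul_one _

theorem stmt0 (X : Type*) [NormedAddCommGroup X] [NormedSpace ℝ X] [CompleteSpace X]
    (α : ℝ) (hα : 0 < α) :
    (∀ (f : X →L[ℝ] ℝ) (β : ℝ), 0 < β → α ≤ Metric.diam (ballSlice f β)) ↔
      (∀ ε > (0:ℝ),
        Metric.closedBall (0:X) 1 = closure (convexHull ℝ (midSet X (α - ε)))) := by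
  constructor
  · intro h ε hε
    apply Set.Subset.antisymm
    · intro x₀ hx₀
      by_contra hx₀D
      obtain ⟨f, u, hfu, hux⟩ := geometric_hahn_banach_closed_point
        ((convex_convexHull ℝ _).closure) isClosed_closure hx₀D
      have hbdd := bddAbove_image_ball f
      set M := sSup (f '' Metric.closedBall (0:X) 1) with hM
      have hx₀M : f x₀ ≤ M := le_csSup hbdd ⟨x₀, hx₀, rfl⟩
      have hβ : 0 < M - u := by linarith
      have hdiam := h f (M - u) hβ
      have hne : (ballSlice f (M - u)).Nonempty := by
        by_contra hne
        rw [Set.not_nonempty_iff_eq_empty] at hne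
        rw [hne, Metric.diam_empty] at hdiam
        linarith
      have hpq : ∃ p ∈ ballSlice f (M - u), ∃ q ∈ ballSlice f (M - u), α - ε ≤ dist p q := by
        by_contra hc
        push_neg at hc
        obtain ⟨p, hp⟩ := hne
        have h0 : (0:ℝ) < α - ε := by
          have := hc p hp p hp
          rwa [dist_self] at this
        have hle : Metric.diam (ballSlice f (M - u)) ≤ α - ε :=
          Metric.diam_le_of_forall_dist_le h0.le fun x hx y hy => (hc x hx y hy).le
        linarith
      obtain ⟨p, hp, q, hq, hpq⟩ := hpq
      have hm : (2:ℝ)⁻¹ • (p + q) ∈ midSet X (α - ε) :=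
        ⟨p, hp.1, q, hq.1, by rwa [← dist_eq_norm], rfl⟩
      have hmD : (2:ℝ)⁻¹ • (p + q) ∈ closure (convexHull ℝ (midSet X (α - ε))) :=
        subset_closure (subset_convexHull ℝ _ hm)
      have hlt := hfu _ hmD
      have hfp : u < f p := by
        have := hp.2
        rw [← hM] at this
        linarith
      have hfq : u < f q := by
        have := hq.2
        rw [← hM] at this
        linarith
      have heq : f ((2:ℝ)⁻¹ • (p + q)) = 2⁻¹ * (f p + f q) := by
        simp [map_add, map_smul, smul_eq_mul]; ring
      rw [heq] at hlt
      linarith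
    · exact closure_minimal
        (convexHull_min (midSet_subset_ball X (α - ε)) (convex_closedBall _ _))
        Metric.isClosed_closedBall
  · intro h f β hβ
    have hbdd := bddAbove_image_ball f
    set M := sSup (f '' Metric.closedBall (0:X) 1) with hM
    refine le_of_forall_pos_le_add fun ε hε => ?_
    have key : ∃ m ∈ midSet X (α - ε), M - β / 2 < f m := by
      by_contra hc
      push_neg at hc
      have hhalf : Convex ℝ {x : X | f x ≤ M - β / 2} :=
        convex_halfSpace_le ⟨fun x y => map_add f x y, fun c x => map_smul f c x⟩ _
      have hclosed : IsClosed {x : X | f x ≤ M - β / 2} :=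
        isClosed_le f.continuous continuous_const
      have hsub : Metric.closedBall (0:X) 1 ⊆ {x : X | f x ≤ M - β / 2} := by
        rw [h ε hε]
        exact closure_minimal (convexHull_min (fun m hm => hc m hm) hhalf) hclosed
      have hMle : M ≤ M - β / 2 := by
        rw [hM]
        refine csSup_le ⟨f 0, 0, mem_closedBall_self (by norm_num), rfl⟩ ?_
        rintro _ ⟨x, hx, rfl⟩
        exact hsub hx
      linarith
    obtain ⟨m, ⟨x, hx, y, hy, hxy, rfl⟩, hfm⟩ := key
    have hfxM : f x ≤ M := le_csSup hbdd ⟨x, hx, rfl⟩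
    have hfyM : f y ≤ M := le_csSup hbdd ⟨y, hy, rfl⟩
    have heq : f ((2:ℝ)⁻¹ • (x + y)) = 2⁻¹ * (f x + f y) := by
      simp [map_add, map_smul, smul_eq_mul]; ring
    rw [heq] at hfm
    have hx' : x ∈ ballSlice f β := ⟨hx, by rw [← hM]; linarith⟩
    have hy' : y ∈ ballSlice f β := ⟨hy, by rw [← hM]; linarith⟩
    have hbound : Bornology.IsBounded (ballSlice f β) :=
      Metric.isBounded_closedBall.subset fun z hz => hz.1
    have hd : α - ε ≤ dist x y := by rw [dist_eq_norm]; exact hxy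
    calc α = (α - ε) + ε := by ring
      _ ≤ dist x y + ε := by linarith
      _ ≤ Metric.diam (ballSlice f β) + ε :=
          add_le_add_left (Metric.dist_le_diam_of_mem hbound hx' hy') ε
end

section
/- Let X be a Banach space, x0 ∈ B_X, ε > 0 and α > 0, and suppose x0 does not belong to the closed convex hull of A = {(x+y)/2 : x, y ∈ B_X, ‖x−y‖ ≥ α−ε}. Then there exists a slice S of B_X containing x0 such that ‖u−v‖ < α−ε for all u, v ∈ S; in particular some slice of B_X has diameter at most α−ε. -/
open Metric Set

theorem stmt2 {X : Type*} [NormedAddCommGroup X] [NormedSpace ℝ X] [CompleteSpace X]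
    (x0 : X) (hx0 : x0 ∈ Metric.closedBall (0:X) 1) (ε α : ℝ) (hε : 0 < ε) (hα : 0 < α)
    (h : x0 ∉ closure (convexHull ℝ (midSet X (α - ε)))) :
    ∃ (f : X →L[ℝ] ℝ) (β : ℝ), 0 < β ∧ x0 ∈ ballSlice f β ∧
      (∀ u ∈ ballSlice f β, ∀ v ∈ ballSlice f β, ‖u - v‖ < α - ε) ∧
      Metric.diam (ballSlice f β) ≤ α - ε := by
  -- First, α - ε > 0, else x0 itself is in midSet.
  have haε : 0 < α - ε := by
    by_contra hle
    push_neg at hle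
    apply h
    apply subset_closure
    apply subset_convexHull
    refine ⟨x0, hx0, x0, hx0, ?_, ?_⟩
    · simpa using hle
    · rw [← two_smul ℝ x0, smul_smul]
      norm_num
  -- Separate x0 from the closed convex set.
  obtain ⟨f, c, hfc, hcx0⟩ := geometric_hahn_banach_closed_point
    (convex_convexHull ℝ (midSet X (α - ε))).closure isClosed_closure h
  set M := sSup (f '' Metric.closedBall (0:X) 1) with hM
  have hbdd : BddAbove (f '' Metric.closedBall (0:X) 1) := by
    refine ⟨‖f‖, ?_⟩
    rintro _ ⟨x, hx, rfl⟩
    calc f x ≤ ‖f x‖ := le_abs_self _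
    _ ≤ ‖f‖ * ‖x‖ := f.le_opNorm x
    _ ≤ ‖f‖ * 1 := by
        exact mul_le_mul_of_nonneg_left (by simpa [mem_closedBall, dist_zero_right] using hx)
          (norm_nonneg f)
    _ = ‖f‖ := mul_one _
  have hx0M : f x0 ≤ M := le_csSup hbdd ⟨x0, hx0, rfl⟩
  have hcM : c < M := lt_of_lt_of_le hcx0 hx0M
  have key : ∀ u ∈ ballSlice f (M - c), ∀ v ∈ ballSlice f (M - c), ‖u - v‖ < α - ε := by
    rintro u ⟨hu, hfu⟩ v ⟨hv, hfv⟩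
    by_contra hcon
    push_neg at hcon
    have hz : (2:ℝ)⁻¹ • (u + v) ∈ midSet X (α - ε) := ⟨u, hu, v, hv, hcon, rfl⟩
    have hz' : f ((2:ℝ)⁻¹ • (u + v)) < c :=
      hfc _ (subset_closure (subset_convexHull ℝ _ hz))
    have : f ((2:ℝ)⁻¹ • (u + v)) = (2:ℝ)⁻¹ * (f u + f v) := by
      simp only [map_smul, map_add, smul_eq_mul]
    rw [this] at hz'
    have h1 : M - (M - c) < f u := hfu
    have h2 : M - (M - c) < f v := hfv
    linarith
  refine ⟨f, M - c, by linarith, ⟨hx0, show M - (M - c) < f x0 by simpa using hcx0⟩, key, ?_⟩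
  apply Metric.diam_le_of_forall_dist_le haε.le
  intro u hu v hv
  rw [dist_eq_norm]
  exact (key u hu v hv).le
end

section
/- Let X and Y be Banach spaces, 1 ≤ p < ∞, α > 0 and n ∈ ℕ. Then C_{n²}^α(X ⊕_p Y) ≤ (C_n^α(X)^p + C_n^α(Y)^p)^{1/p}. In particular, if X and Y both have the uniform slice-D2P (i.e., C_n^β → 0 as n → ∞ for every 0 < β < 2), then so does X ⊕_p Y. -/
open Metric Set Filter

def convN {X : Type*} [NormedAddCommGroup X] [NormedSpace ℝ X] (n : ℕ) (C : Set X) : Set X :=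
  {z | ∃ (l : Fin n → ℝ) (x : Fin n → X), (∀ i, 0 ≤ l i) ∧ (∑ i, l i) = 1 ∧
    (∀ i, x i ∈ C) ∧ z = ∑ i, l i • x i}

noncomputable def Cna (X : Type*) [NormedAddCommGroup X] [NormedSpace ℝ X]
    (n : ℕ) (α : ℝ) : ℝ :=
  ⨆ x : Metric.sphere (0:X) 1, Metric.infDist (x : X) (convN n (midSet X α))

section Aux

variable {X : Type*} [NormedAddCommGroup X] [NormedSpace ℝ X]

lemma midSet_subset (α : ℝ) : midSet X α ⊆ closedBall (0:X) 1 := by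
  rintro z ⟨x, hx, y, hy, -, rfl⟩
  rw [mem_closedBall, dist_zero_right] at *
  have h1 : ‖x + y‖ ≤ 2 := le_trans (norm_add_le x y) (by linarith)
  calc ‖(2:ℝ)⁻¹ • (x + y)‖ = 2⁻¹ * ‖x + y‖ := by
        rw [norm_smul, Real.norm_eq_abs]; norm_num
  _ ≤ 1 := by linarith

lemma convN_subset {C : Set X} (h : C ⊆ closedBall (0:X) 1) (n : ℕ) :
    convN n C ⊆ closedBall (0:X) 1 := by
  rintro z ⟨l, x, hl, hsum, hx, rfl⟩
  rw [mem_closedBall, dist_zero_right]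
  calc ‖∑ i, l i • x i‖ ≤ ∑ i, ‖l i • x i‖ := norm_sum_le _ _
  _ ≤ ∑ i, l i * 1 := by
      refine Finset.sum_le_sum fun i _ => ?_
      rw [norm_smul, Real.norm_eq_abs, abs_of_nonneg (hl i)]
      have := h (hx i)
      rw [mem_closedBall, dist_zero_right] at this
      exact mul_le_mul_of_nonneg_left this (hl i)
  _ = 1 := by simp [hsum]

lemma cna_nonneg (n : ℕ) (α : ℝ) : 0 ≤ Cna X n α :=
  Real.iSup_nonneg fun _ => infDist_nonneg

lemma infDist_le_cna {z : X} (hz : ‖z‖ = 1) (n : ℕ) (α : ℝ) :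
    infDist z (convN n (midSet X α)) ≤ Cna X n α := by
  have hb : BddAbove (Set.range fun x : Metric.sphere (0:X) 1 =>
      infDist (x : X) (convN n (midSet X α))) := by
    refine ⟨2, ?_⟩
    rintro r ⟨⟨w, hw⟩, rfl⟩
    rcases (convN n (midSet X α)).eq_empty_or_nonempty with he | ⟨c, hc⟩
    · simp [he]
    · have hcb := convN_subset (midSet_subset α) n hc
      rw [mem_closedBall, dist_zero_right] at hcb
      have hwn : ‖w‖ = 1 := by simpa [mem_sphere_iff_norm] using hw
      calc infDist w (convN n (midSet X α)) ≤ dist w c := infDist_le_dist_of_mem hc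
      _ ≤ ‖w‖ + ‖c‖ := by rw [dist_eq_norm]; exact norm_sub_le _ _
      _ ≤ 2 := by rw [hwn]; linarith
  exact le_ciSup hb (⟨z, by simp [mem_sphere_iff_norm, hz]⟩ : Metric.sphere (0:X) 1)

lemma mem_convN_of_mem {C : Set X} {c : X} (hc : c ∈ C) {n : ℕ} (hn : 1 ≤ n) :
    c ∈ convN n C := by
  refine ⟨fun _ => (n:ℝ)⁻¹, fun _ => c, fun _ => by positivity, ?_, fun _ => hc, ?_⟩
  · simp [Finset.sum_const]
    field_simp
  · rw [← Finset.sum_smul]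
    simp [Finset.sum_const]
    rw [mul_inv_cancel₀ (by positivity), one_smul]

lemma convN_zero (C : Set X) : convN 0 C = ∅ := by
  ext z
  simp only [convN, mem_setOf_eq, mem_empty_iff_false, iff_false]
  rintro ⟨l, x, -, hsum, -⟩
  simp at hsum

lemma convN_empty {n : ℕ} (hn : 1 ≤ n) : convN n (∅ : Set X) = ∅ := by
  ext z
  simp only [convN, mem_setOf_eq, mem_empty_iff_false, iff_false]
  rintro ⟨l, x, -, -, hx, -⟩
  exact hx ⟨0, hn⟩

lemma sum_pad {M : Type*} [AddCommMonoid M] {m k : ℕ} (h : m ≤ k) (f : Fin m → M) :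
    ∑ i : Fin k, (if h' : (i:ℕ) < m then f ⟨i, h'⟩ else 0) = ∑ i : Fin m, f i := by
  have e1 : ∑ i : Fin k, (if h' : (i:ℕ) < m then f ⟨i, h'⟩ else 0)
      = ∑ i ∈ Finset.range k, (if h' : i < m then f ⟨i, h'⟩ else 0) :=
    Fin.sum_univ_eq_sum_range (fun i => if h' : i < m then f ⟨i, h'⟩ else 0) k
  have e2 : ∑ i ∈ Finset.range k, (if h' : i < m then f ⟨i, h'⟩ else 0)
      = ∑ i ∈ Finset.range m, (if h' : i < m then f ⟨i, h'⟩ else 0) :=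
    (Finset.sum_subset (Finset.range_subset_range.2 h)
      (fun i _ hi => dif_neg (by simpa using hi))).symm
  have e3 : ∑ i ∈ Finset.range m, (if h' : i < m then f ⟨i, h'⟩ else 0) = ∑ i : Fin m, f i := by
    rw [← Fin.sum_univ_eq_sum_range (fun i => if h' : i < m then f ⟨i, h'⟩ else 0) m]
    exact Finset.sum_congr rfl fun i _ => by rw [dif_pos i.isLt]
  rw [e1, e2, e3]

lemma convN_mono {C : Set X} {m k : ℕ} (hm : 1 ≤ m) (h : m ≤ k) :
    convN m C ⊆ convN k C := by
  rintro z ⟨l, x, hl, hsum, hx, rfl⟩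
  classical
  refine ⟨fun i => if h' : (i:ℕ) < m then l ⟨i, h'⟩ else 0,
      fun i => if h' : (i:ℕ) < m then x ⟨i, h'⟩ else x ⟨0, hm⟩, ?_, ?_, ?_, ?_⟩
  · intro i; dsimp only; split
    · exact hl _
    · exact le_refl _
  · show (∑ i : Fin k, if h' : (i:ℕ) < m then l ⟨i, h'⟩ else 0) = 1
    rw [sum_pad h l, hsum]
  · intro i; dsimp only; split <;> exact hx _
  · show ∑ i : Fin m, l i • x i = ∑ i : Fin k,
        (if h' : (i:ℕ) < m then l ⟨i, h'⟩ else 0) • (if h' : (i:ℕ) < m then x ⟨i, h'⟩ else x ⟨0, hm⟩)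
    rw [Finset.sum_congr rfl (fun (i : Fin k) _ => show
        (if h' : (i:ℕ) < m then l ⟨i, h'⟩ else 0) • (if h' : (i:ℕ) < m then x ⟨i, h'⟩ else x ⟨0, hm⟩)
          = if h' : (i:ℕ) < m then l ⟨i, h'⟩ • x ⟨i, h'⟩ else 0 from by
        by_cases h' : (i:ℕ) < m <;> simp [h']), sum_pad h (fun i => l i • x i)]

lemma cna_anti {m k : ℕ} (hm : 1 ≤ m) (h : m ≤ k) (α : ℝ) : Cna X k α ≤ Cna X m α := by
  refine Real.iSup_le (fun z => ?_) (cna_nonneg m α)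
  rcases (convN m (midSet X α)).eq_empty_or_nonempty with he | hne
  · have hC : midSet X α = ∅ := by
      rcases (midSet X α).eq_empty_or_nonempty with h' | ⟨c, hc⟩
      · exact h'
      · exact absurd (he ▸ mem_convN_of_mem hc hm) (Set.notMem_empty c)
    rw [hC, convN_empty (le_trans hm h), infDist_empty]
    exact cna_nonneg m α
  · calc infDist (z:X) (convN k (midSet X α)) ≤ infDist (z:X) (convN m (midSet X α)) :=
        infDist_le_infDist_of_subset (convN_mono hm h) hne
    _ ≤ Cna X m α := infDist_le_cna (by simpa [mem_sphere_iff_norm] using z.2) m α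

lemma side_approx {n : ℕ} (hn : 1 ≤ n) {α : ℝ} (hα : 0 < α) (h2 : α ≤ 2)
    (x : X) {ε : ℝ} (hε : 0 < ε) :
    ∃ (l : Fin n → ℝ) (s t : Fin n → X),
      (∀ i, 0 ≤ l i) ∧ (∑ i, l i) = 1 ∧
      (∀ i, s i ∈ closedBall (0:X) 1) ∧ (∀ i, t i ∈ closedBall (0:X) 1) ∧
      (∀ i, ‖x‖ = 0 ∨ α ≤ ‖s i - t i‖) ∧
      ‖x - ‖x‖ • ∑ i, l i • ((2:ℝ)⁻¹ • (s i + t i))‖ ≤ ‖x‖ * (Cna X n α + ε) := by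
  by_cases hx : x = 0
  · refine ⟨fun _ => (n:ℝ)⁻¹, 0, 0, fun _ => by positivity, ?_, ?_, ?_, ?_, ?_⟩
    · simp [Finset.sum_const]
      field_simp
    · intro i; simp
    · intro i; simp
    · intro i; left; simp [hx]
    · simp [hx]
  · set u : X := ‖x‖⁻¹ • x with hu
    have hun : ‖u‖ = 1 := norm_smul_inv_norm hx
    have hmid : (0:X) ∈ midSet X α := by
      refine ⟨u, ?_, -u, ?_, ?_, ?_⟩
      · simp [mem_closedBall, hun]
      · simp [mem_closedBall, hun]
      · rw [sub_neg_eq_add]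
        calc α ≤ 2 := h2
        _ = ‖u + u‖ := by rw [← two_smul ℝ u, norm_smul]; simp [hun]
      · simp
    have hA : (convN n (midSet X α)).Nonempty := ⟨0, mem_convN_of_mem hmid hn⟩
    have hlt : infDist u (convN n (midSet X α)) < Cna X n α + ε :=
      lt_of_le_of_lt (infDist_le_cna hun n α) (by linarith)
    obtain ⟨w, hw, hdw⟩ := (infDist_lt_iff hA).1 hlt
    obtain ⟨l, y, hl, hsum, hy, rfl⟩ := hw
    choose s hs t ht hst hyd using hy
    refine ⟨l, s, t, hl, hsum, hs, ht, fun i => Or.inr (hst i), ?_⟩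
    have hrw : ∑ i, l i • ((2:ℝ)⁻¹ • (s i + t i)) = ∑ i, l i • y i :=
      Finset.sum_congr rfl fun i _ => by rw [hyd i]
    rw [hrw]
    have hxu : ‖x‖ • u = x := by
      rw [hu, smul_smul, mul_inv_cancel₀ (norm_ne_zero_iff.2 hx), one_smul]
    calc ‖x - ‖x‖ • ∑ i, l i • y i‖ = ‖‖x‖ • (u - ∑ i, l i • y i)‖ := by
          rw [smul_sub, hxu]
    _ = ‖x‖ * ‖u - ∑ i, l i • y i‖ := by rw [norm_smul]; simp
    _ ≤ ‖x‖ * (Cna X n α + ε) := by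
        refine mul_le_mul_of_nonneg_left ?_ (norm_nonneg x)
        rw [← dist_eq_norm]
        exact le_of_lt hdw

end Aux

section Key

variable {X Y : Type*} [NormedAddCommGroup X] [NormedSpace ℝ X]
  [NormedAddCommGroup Y] [NormedSpace ℝ Y] {p : ENNReal}

lemma sum_fst' {ι : Type*} (s : Finset ι) (f : ι → WithLp p (X × Y)) :
    (∑ i ∈ s, f i).fst = ∑ i ∈ s, (f i).fst := by
  classical
  induction s using Finset.induction with
  | empty => simp
  | insert _ _ h ih => rw [Finset.sum_insert h, Finset.sum_insert h, WithLp.add_fst, ih]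

lemma sum_snd' {ι : Type*} (s : Finset ι) (f : ι → WithLp p (X × Y)) :
    (∑ i ∈ s, f i).snd = ∑ i ∈ s, (f i).snd := by
  classical
  induction s using Finset.induction with
  | empty => simp
  | insert _ _ h ih => rw [Finset.sum_insert h, Finset.sum_insert h, WithLp.add_snd, ih]

lemma key_mem [Fact (1 ≤ p)] (hq : 0 < p.toReal)
    {n : ℕ} {α a b : ℝ} (hα : 0 ≤ α) (ha : 0 ≤ a) (hb : 0 ≤ b)
    (hab : a ^ p.toReal + b ^ p.toReal = 1)
    {l : Fin n → ℝ} {s t : Fin n → X} {m : Fin n → ℝ} {s' t' : Fin n → Y}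
    (hl : ∀ i, 0 ≤ l i) (hlsum : ∑ i, l i = 1)
    (hm : ∀ i, 0 ≤ m i) (hmsum : ∑ i, m i = 1)
    (hs : ∀ i, s i ∈ closedBall (0:X) 1) (ht : ∀ i, t i ∈ closedBall (0:X) 1)
    (hs' : ∀ i, s' i ∈ closedBall (0:Y) 1) (ht' : ∀ i, t' i ∈ closedBall (0:Y) 1)
    (hst : ∀ i, a = 0 ∨ α ≤ ‖s i - t i‖) (hst' : ∀ j, b = 0 ∨ α ≤ ‖s' j - t' j‖) :
    (WithLp.equiv p (X × Y)).symm
        (a • ∑ i, l i • ((2:ℝ)⁻¹ • (s i + t i)), b • ∑ j, m j • ((2:ℝ)⁻¹ • (s' j + t' j)))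
      ∈ convN (n ^ 2) (midSet (WithLp p (X × Y)) α) := by
  set q := p.toReal
  have hq' : q ≠ 0 := ne_of_gt hq
  set e : Fin (n ^ 2) ≃ Fin n × Fin n :=
    (finCongr (pow_two n)).trans finProdFinEquiv.symm with he
  set SS : Fin n × Fin n → WithLp p (X × Y) :=
    fun ij => (WithLp.equiv p (X × Y)).symm (a • s ij.1, b • s' ij.2) with hSS
  set TT : Fin n × Fin n → WithLp p (X × Y) :=
    fun ij => (WithLp.equiv p (X × Y)).symm (a • t ij.1, b • t' ij.2) with hTT
  have hSnorm : ∀ (c : X) (c' : Y), c ∈ closedBall (0:X) 1 → c' ∈ closedBall (0:Y) 1 →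
      ‖(WithLp.equiv p (X × Y)).symm (a • c, b • c')‖ ≤ 1 := by
    intro c c' hc hc'
    rw [mem_closedBall, dist_zero_right] at hc hc'
    rw [WithLp.prod_norm_eq_add hq]
    have h1 : ‖((WithLp.equiv p (X × Y)).symm (a • c, b • c')).fst‖ ^ q ≤ a ^ q := by
      rw [WithLp.equiv_symm_apply, WithLp.toLp_fst]
      refine Real.rpow_le_rpow (norm_nonneg _) ?_ hq.le
      rw [norm_smul, Real.norm_eq_abs, abs_of_nonneg ha]
      exact mul_le_of_le_one_right ha hc
    have h2 : ‖((WithLp.equiv p (X × Y)).symm (a • c, b • c')).snd‖ ^ q ≤ b ^ q := by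
      rw [WithLp.equiv_symm_apply, WithLp.toLp_snd]
      refine Real.rpow_le_rpow (norm_nonneg _) ?_ hq.le
      rw [norm_smul, Real.norm_eq_abs, abs_of_nonneg hb]
      exact mul_le_of_le_one_right hb hc'
    refine Real.rpow_le_one (by positivity) (by linarith [hab]) (by positivity)
  have hmidmem : ∀ ij : Fin n × Fin n,
      (2:ℝ)⁻¹ • (SS ij + TT ij) ∈ midSet (WithLp p (X × Y)) α := by
    intro ij
    refine ⟨SS ij, ?_, TT ij, ?_, ?_, rfl⟩
    · rw [mem_closedBall, dist_zero_right]
      exact hSnorm _ _ (hs ij.1) (hs' ij.2)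
    · rw [mem_closedBall, dist_zero_right]
      exact hSnorm _ _ (ht ij.1) (ht' ij.2)
    · -- α ≤ ‖SS ij - TT ij‖
      have hfst : (SS ij - TT ij).fst = a • (s ij.1 - t ij.1) := by
        simp [hSS, hTT, smul_sub]
      have hsnd : (SS ij - TT ij).snd = b • (s' ij.2 - t' ij.2) := by
        simp [hSS, hTT, smul_sub]
      rw [WithLp.prod_norm_eq_add hq, hfst, hsnd]
      have h1 : (a * α) ^ q ≤ ‖a • (s ij.1 - t ij.1)‖ ^ q := by
        rw [norm_smul, Real.norm_eq_abs, abs_of_nonneg ha]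
        refine Real.rpow_le_rpow (by positivity) ?_ hq.le
        rcases hst ij.1 with h | h
        · simp [h]
        · exact mul_le_mul_of_nonneg_left h ha
      have h2 : (b * α) ^ q ≤ ‖b • (s' ij.2 - t' ij.2)‖ ^ q := by
        rw [norm_smul, Real.norm_eq_abs, abs_of_nonneg hb]
        refine Real.rpow_le_rpow (by positivity) ?_ hq.le
        rcases hst' ij.2 with h | h
        · simp [h]
        · exact mul_le_mul_of_nonneg_left h hb
      have hkey : (1:ℝ) * α ^ q ≤ ‖a • (s ij.1 - t ij.1)‖ ^ q + ‖b • (s' ij.2 - t' ij.2)‖ ^ q := by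
        rw [← hab, add_mul]
        rw [Real.mul_rpow ha hα] at h1
        rw [Real.mul_rpow hb hα] at h2
        linarith
      rw [one_mul] at hkey
      calc α = (α ^ q) ^ (1 / q) := by
            rw [← Real.rpow_mul hα, mul_one_div_cancel hq', Real.rpow_one]
      _ ≤ _ := Real.rpow_le_rpow (by positivity) hkey (by positivity)
  refine ⟨fun k => l (e k).1 * m (e k).2, fun k => (2:ℝ)⁻¹ • (SS (e k) + TT (e k)),
      fun k => mul_nonneg (hl _) (hm _), ?_, fun k => hmidmem (e k), ?_⟩
  · rw [Equiv.sum_comp e (fun ij : Fin n × Fin n => l ij.1 * m ij.2)]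
    rw [Fintype.sum_prod_type]
    simp only [← Finset.mul_sum, hmsum, mul_one]
    exact hlsum
  · rw [Equiv.sum_comp e (fun ij : Fin n × Fin n =>
      (l ij.1 * m ij.2) • ((2:ℝ)⁻¹ • (SS ij + TT ij)))]
    have hfst : (∑ ij : Fin n × Fin n, (l ij.1 * m ij.2) • ((2:ℝ)⁻¹ • (SS ij + TT ij))).fst
        = a • ∑ i, l i • ((2:ℝ)⁻¹ • (s i + t i)) := by
      rw [sum_fst']
      have hterm : ∀ ij : Fin n × Fin n, ((l ij.1 * m ij.2) • ((2:ℝ)⁻¹ • (SS ij + TT ij))).fst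
          = (l ij.1 * m ij.2) • ((2:ℝ)⁻¹ • (a • s ij.1 + a • t ij.1)) := by
        intro ij; simp [hSS, hTT]
      rw [Finset.sum_congr rfl fun ij _ => hterm ij, Fintype.sum_prod_type]
      have hcol : ∀ i : Fin n, ∑ j : Fin n, (l i * m j) • ((2:ℝ)⁻¹ • (a • s i + a • t i))
          = l i • ((2:ℝ)⁻¹ • (a • s i + a • t i)) := by
        intro i
        rw [← Finset.sum_smul, ← Finset.mul_sum, hmsum, mul_one]
      rw [Finset.sum_congr rfl fun i _ => hcol i, Finset.smul_sum]
      refine Finset.sum_congr rfl fun i _ => ?_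
      rw [← smul_add (a:ℝ) (s i) (t i), smul_comm ((2:ℝ)⁻¹) a, smul_comm (l i) a]
    have hsnd : (∑ ij : Fin n × Fin n, (l ij.1 * m ij.2) • ((2:ℝ)⁻¹ • (SS ij + TT ij))).snd
        = b • ∑ j, m j • ((2:ℝ)⁻¹ • (s' j + t' j)) := by
      rw [sum_snd']
      have hterm : ∀ ij : Fin n × Fin n, ((l ij.1 * m ij.2) • ((2:ℝ)⁻¹ • (SS ij + TT ij))).snd
          = (l ij.1 * m ij.2) • ((2:ℝ)⁻¹ • (b • s' ij.2 + b • t' ij.2)) := by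
        intro ij; simp [hSS, hTT]
      rw [Finset.sum_congr rfl fun ij _ => hterm ij, Fintype.sum_prod_type]
      have hcol : ∀ j : Fin n, ∑ i : Fin n, (l i * m j) • ((2:ℝ)⁻¹ • (b • s' j + b • t' j))
          = m j • ((2:ℝ)⁻¹ • (b • s' j + b • t' j)) := by
        intro j
        rw [← Finset.sum_smul, ← Finset.sum_mul, hlsum, one_mul]
      rw [Finset.sum_comm]
      rw [Finset.sum_congr rfl fun j _ => hcol j, Finset.smul_sum]
      refine Finset.sum_congr rfl fun j _ => ?_
      rw [← smul_add (b:ℝ) (s' j) (t' j), smul_comm ((2:ℝ)⁻¹) b, smul_comm (m j) b]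
    refine ((WithLp.equiv p (X × Y)).symm_apply_eq).mpr ?_
    refine Prod.ext ?_ ?_
    · exact hfst.symm
    · exact hsnd.symm

end Key

section Main

variable {X Y : Type*} [NormedAddCommGroup X] [NormedSpace ℝ X]
  [NormedAddCommGroup Y] [NormedSpace ℝ Y]

lemma main_ineq (p : ENNReal) [Fact (1 ≤ p)] (hp : p ≠ ⊤) (n : ℕ) (α : ℝ) (hα : 0 < α) :
    Cna (WithLp p (X × Y)) (n ^ 2) α ≤
      (Cna X n α ^ p.toReal + Cna Y n α ^ p.toReal) ^ (1 / p.toReal) := by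
  have hq1 : 1 ≤ p.toReal := by
    have h := Fact.out (p := 1 ≤ p)
    rw [← ENNReal.toReal_one]
    exact ENNReal.toReal_mono hp h
  have hq : 0 < p.toReal := lt_of_lt_of_le one_pos hq1
  set q := p.toReal with hqdef
  have hRnn : 0 ≤ (Cna X n α ^ q + Cna Y n α ^ q) ^ (1 / q) :=
    Real.rpow_nonneg (add_nonneg (Real.rpow_nonneg (cna_nonneg n α) q)
      (Real.rpow_nonneg (cna_nonneg n α) q)) _
  refine Real.iSup_le (fun z' => ?_) hRnn
  obtain ⟨z, hz⟩ := z'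
  have hzn : ‖z‖ = 1 := by simpa [mem_sphere_iff_norm] using hz
  rcases Nat.eq_zero_or_pos n with hn | hn
  · subst hn
    rw [show (0:ℕ)^2 = 0 from rfl, convN_zero, infDist_empty]
    exact hRnn
  by_cases h2 : 2 < α
  · have hempty : midSet (WithLp p (X × Y)) α = ∅ := by
      ext w
      simp only [midSet, mem_setOf_eq, mem_empty_iff_false, iff_false]
      rintro ⟨u, hu, v, hv, hd, -⟩
      rw [mem_closedBall, dist_zero_right] at hu hv
      have : ‖u - v‖ ≤ 2 := le_trans (norm_sub_le _ _) (by linarith)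
      linarith
    rw [hempty, convN_empty (Nat.one_le_iff_ne_zero.2 (pow_ne_zero 2 hn.ne')), infDist_empty]
    exact hRnn
  push_neg at h2
  set a := ‖z.fst‖ with hadef
  set b := ‖z.snd‖ with hbdef
  have hab : a ^ q + b ^ q = 1 := by
    have hnorm := WithLp.prod_norm_eq_add hq z
    rw [hzn] at hnorm
    have h' : ((a ^ q + b ^ q) ^ (1/q)) ^ q = 1 ^ q := by rw [← hnorm]
    rwa [← Real.rpow_mul (by positivity), one_div_mul_cancel hq.ne', Real.rpow_one,
      Real.one_rpow] at h'
  have ha1 : a ≤ 1 := by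
    have haq : a ^ q ≤ 1 := by
      have := Real.rpow_nonneg (norm_nonneg z.snd) q
      linarith
    calc a = (a ^ q) ^ (1/q) := by
          rw [← Real.rpow_mul (norm_nonneg _), mul_one_div_cancel hq.ne', Real.rpow_one]
    _ ≤ 1 ^ (1/q) := Real.rpow_le_rpow (Real.rpow_nonneg (norm_nonneg _) q) haq (by positivity)
    _ = 1 := Real.one_rpow _
  have hb1 : b ≤ 1 := by
    have hbq : b ^ q ≤ 1 := by
      have := Real.rpow_nonneg (norm_nonneg z.fst) q
      linarith
    calc b = (b ^ q) ^ (1/q) := by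
          rw [← Real.rpow_mul (norm_nonneg _), mul_one_div_cancel hq.ne', Real.rpow_one]
    _ ≤ 1 ^ (1/q) := Real.rpow_le_rpow (Real.rpow_nonneg (norm_nonneg _) q) hbq (by positivity)
    _ = 1 := Real.one_rpow _
  set CX := Cna X n α with hCXdef
  set CY := Cna Y n α with hCYdef
  have hCX : 0 ≤ CX := cna_nonneg n α
  have hCY : 0 ≤ CY := cna_nonneg n α
  set g : ℝ → ℝ := fun ε => ((CX + ε) ^ q + (CY + ε) ^ q) ^ (1/q) with hgdef
  have hkey : ∀ ε : ℝ, 0 < ε →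
      infDist z (convN (n^2) (midSet (WithLp p (X × Y)) α)) ≤ g ε := by
    intro ε hε
    obtain ⟨l, s, t, hl, hlsum, hs, ht, hst, hxerr⟩ := side_approx hn hα h2 z.fst hε
    obtain ⟨m, s', t', hm, hmsum, hs', ht', hst', hyerr⟩ := side_approx hn hα h2 z.snd hε
    set w := (WithLp.equiv p (X × Y)).symm
      (a • ∑ i, l i • ((2:ℝ)⁻¹ • (s i + t i)), b • ∑ j, m j • ((2:ℝ)⁻¹ • (s' j + t' j)))
      with hwdef
    have hw : w ∈ convN (n^2) (midSet (WithLp p (X × Y)) α) :=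
      key_mem hq hα.le (norm_nonneg _) (norm_nonneg _) hab hl hlsum hm hmsum hs ht hs' ht'
        hst hst'
    refine le_trans (infDist_le_dist_of_mem hw) ?_
    rw [dist_eq_norm, WithLp.prod_norm_eq_add hq]
    have hfst : (z - w).fst = z.fst - a • ∑ i, l i • ((2:ℝ)⁻¹ • (s i + t i)) := by
      rw [WithLp.sub_fst, hwdef, WithLp.equiv_symm_apply, WithLp.toLp_fst]; rfl
    have hsnd : (z - w).snd = z.snd - b • ∑ j, m j • ((2:ℝ)⁻¹ • (s' j + t' j)) := by
      rw [WithLp.sub_snd, hwdef, WithLp.equiv_symm_apply, WithLp.toLp_snd]; rfl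
    have hCXε : 0 ≤ CX + ε := by linarith
    have hCYε : 0 ≤ CY + ε := by linarith
    have h1 : ‖(z - w).fst‖ ^ q ≤ (CX + ε) ^ q := by
      refine Real.rpow_le_rpow (norm_nonneg _) ?_ hq.le
      rw [hfst]
      calc ‖z.fst - a • ∑ i, l i • ((2:ℝ)⁻¹ • (s i + t i))‖ ≤ a * (CX + ε) := hxerr
      _ ≤ 1 * (CX + ε) := mul_le_mul_of_nonneg_right ha1 hCXε
      _ = CX + ε := one_mul _
    have h2' : ‖(z - w).snd‖ ^ q ≤ (CY + ε) ^ q := by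
      refine Real.rpow_le_rpow (norm_nonneg _) ?_ hq.le
      rw [hsnd]
      calc ‖z.snd - b • ∑ j, m j • ((2:ℝ)⁻¹ • (s' j + t' j))‖ ≤ b * (CY + ε) := hyerr
      _ ≤ 1 * (CY + ε) := mul_le_mul_of_nonneg_right hb1 hCYε
      _ = CY + ε := one_mul _
    exact Real.rpow_le_rpow (by positivity) (add_le_add h1 h2') (by positivity)
  have hcont : ContinuousAt g 0 := by
    have hc1 : ContinuousAt (fun ε : ℝ => (CX + ε) ^ q) 0 := by
      exact (Real.continuousAt_rpow_const _ _ (Or.inr hq.le)).comp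
        ((continuous_const.add continuous_id).continuousAt)
    have hc2 : ContinuousAt (fun ε : ℝ => (CY + ε) ^ q) 0 := by
      exact (Real.continuousAt_rpow_const _ _ (Or.inr hq.le)).comp
        ((continuous_const.add continuous_id).continuousAt)
    exact (Real.continuousAt_rpow_const _ _ (Or.inr (by positivity))).comp (hc1.add hc2)
  have hle : infDist z (convN (n^2) (midSet (WithLp p (X × Y)) α)) ≤ g 0 := by
    refine ge_of_tendsto (hcont.continuousWithinAt.tendsto
      (s := Set.Ioi (0:ℝ))) ?_
    exact eventually_mem_nhdsWithin.mono fun ε hε => hkey ε hε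
  simpa [hgdef] using hle

end Main

/-- A Banach space has the uniform slice-D2P if `C_n^α(X) → 0` for every `0 < α < 2`. -/
def UniformSliceD2P (X : Type*) [NormedAddCommGroup X] [NormedSpace ℝ X] : Prop :=
  ∀ α : ℝ, 0 < α → α < 2 → Tendsto (fun n : ℕ => Cna X n α) atTop (nhds 0)

theorem stmt5 (X Y : Type*) [NormedAddCommGroup X] [NormedSpace ℝ X] [CompleteSpace X]
    [NormedAddCommGroup Y] [NormedSpace ℝ Y] [CompleteSpace Y]
    (p : ENNReal) [Fact (1 ≤ p)] (hp : p ≠ ⊤) (n : ℕ) (α : ℝ) (hα : 0 < α) :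
    Cna (WithLp p (X × Y)) (n ^ 2) α ≤
        (Cna X n α ^ p.toReal + Cna Y n α ^ p.toReal) ^ (1 / p.toReal) ∧
      (UniformSliceD2P X → UniformSliceD2P Y → UniformSliceD2P (WithLp p (X × Y))) := by
  have hq1 : 1 ≤ p.toReal := by
    have h := Fact.out (p := 1 ≤ p)
    rw [← ENNReal.toReal_one]
    exact ENNReal.toReal_mono hp h
  have hq : 0 < p.toReal := lt_of_lt_of_le one_pos hq1
  refine ⟨main_ineq p hp n α hα, ?_⟩
  intro hX hY α' hα1 hα2
  have hfX : Tendsto (fun k : ℕ => Cna X k α' ^ p.toReal) atTop (nhds 0) := by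
    have hc : ContinuousAt (fun x : ℝ => x ^ p.toReal) 0 :=
      Real.continuousAt_rpow_const 0 _ (Or.inr hq.le)
    have := hc.tendsto.comp (hX α' hα1 hα2)
    simpa [Real.zero_rpow hq.ne', Function.comp_def] using this
  have hfY : Tendsto (fun k : ℕ => Cna Y k α' ^ p.toReal) atTop (nhds 0) := by
    have hc : ContinuousAt (fun x : ℝ => x ^ p.toReal) 0 :=
      Real.continuousAt_rpow_const 0 _ (Or.inr hq.le)
    have := hc.tendsto.comp (hY α' hα1 hα2)
    simpa [Real.zero_rpow hq.ne', Function.comp_def] using this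
  have hf : Tendsto (fun k : ℕ =>
      (Cna X k α' ^ p.toReal + Cna Y k α' ^ p.toReal) ^ (1 / p.toReal)) atTop (nhds 0) := by
    have hsum := hfX.add hfY
    rw [add_zero] at hsum
    have hc : ContinuousAt (fun x : ℝ => x ^ (1 / p.toReal)) 0 :=
      Real.continuousAt_rpow_const 0 _ (Or.inr (by positivity))
    have := hc.tendsto.comp hsum
    rw [Real.zero_rpow (by positivity : (1 / p.toReal) ≠ 0)] at this
    exact this
  have hsqrt : Tendsto Nat.sqrt atTop atTop := by
    refine tendsto_atTop_atTop_of_monotone (fun _ _ h => Nat.sqrt_le_sqrt h) ?_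
    intro c
    exact ⟨c ^ 2, le_of_eq (Nat.sqrt_eq' c).symm⟩
  have hsq : Tendsto (fun k : ℕ =>
      (Cna X (Nat.sqrt k) α' ^ p.toReal + Cna Y (Nat.sqrt k) α' ^ p.toReal) ^ (1 / p.toReal))
      atTop (nhds 0) := hf.comp hsqrt
  refine squeeze_zero' (Eventually.of_forall fun k => cna_nonneg k α') ?_ hsq
  filter_upwards [eventually_ge_atTop 1] with k hk
  have h1 : 1 ≤ Nat.sqrt k := by
    calc 1 = Nat.sqrt 1 := by simp
    _ ≤ Nat.sqrt k := Nat.sqrt_le_sqrt hk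
  calc Cna (WithLp p (X × Y)) k α' ≤ Cna (WithLp p (X × Y)) (Nat.sqrt k ^ 2) α' :=
        cna_anti (Nat.one_le_iff_ne_zero.2 (pow_ne_zero 2 (by omega))) (Nat.sqrt_le' k) α'
  _ ≤ _ := main_ineq p hp (Nat.sqrt k) α' hα1
end

section
/- Let H be a uniformly integrable subset of L¹(μ) over a finite measure space and ε > 0. Then there exists δ > 0 such that whenever g ∈ H and f ∈ L¹ satisfies d_m(f,0) < δ, one has ‖f+g‖₁ ≥ ‖f‖₁ + ‖g‖₁ − ε. -/
open MeasureTheory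

noncomputable def dm {Ω : Type*} [MeasurableSpace Ω] (μ : Measure Ω)
    (f g : Ω → ℝ) : ℝ :=
  sInf {ε : ℝ | 0 < ε ∧ μ {t | ε ≤ |f t - g t|} ≤ ENNReal.ofReal ε}

theorem stmt9 {Ω : Type*} [MeasurableSpace Ω] (μ : Measure Ω) [IsFiniteMeasure μ]
    (H : Set (Ω → ℝ)) (hInt : ∀ g ∈ H, Integrable g μ)
    (hBdd : ∃ C : ℝ, ∀ g ∈ H, ∫ t, |g t| ∂μ ≤ C)
    (hUI : ∀ ε > (0:ℝ), ∃ M : ℝ, ∀ g ∈ H, ∫ t in {t | M ≤ |g t|}, |g t| ∂μ ≤ ε)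
    (ε : ℝ) (hε : 0 < ε) :
    ∃ δ > (0:ℝ), ∀ g ∈ H, ∀ f : Ω → ℝ, Integrable f μ → dm μ f 0 < δ →
      (∫ t, |f t| ∂μ) + (∫ t, |g t| ∂μ) - ε ≤ ∫ t, |f t + g t| ∂μ := by
  obtain ⟨M0, hM0⟩ := hUI (ε / 4) (by linarith)
  set M : ℝ := max M0 1 with hMdef
  have hM1 : (1:ℝ) ≤ M := le_max_right _ _
  have hM0M : M0 ≤ M := le_max_left _ _
  set mΩ : ℝ := (μ Set.univ).toReal with hmΩdef
  have hmΩ0 : 0 ≤ mΩ := ENNReal.toReal_nonneg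
  have hden : 0 < mΩ + M + 1 := by linarith
  set δ : ℝ := ε / (4 * (mΩ + M + 1)) with hδdef
  have hδpos : 0 < δ := by
    apply div_pos hε; linarith
  refine ⟨δ, hδpos, ?_⟩
  intro g hg f hf hdm
  have hgI : Integrable g μ := hInt g hg
  -- extract ε' from the infimum
  have hSne : {ε : ℝ | 0 < ε ∧ μ {t | ε ≤ |f t - (0 : Ω → ℝ) t|} ≤ ENNReal.ofReal ε}.Nonempty := by
    refine ⟨mΩ + 1, by linarith, ?_⟩
    calc μ {t | mΩ + 1 ≤ |f t - (0 : Ω → ℝ) t|} ≤ μ Set.univ := measure_mono (Set.subset_univ _)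
      _ = ENNReal.ofReal mΩ := (ENNReal.ofReal_toReal (measure_ne_top μ _)).symm
      _ ≤ ENNReal.ofReal (mΩ + 1) := ENNReal.ofReal_le_ofReal (by linarith)
  have hSbdd : BddBelow {ε : ℝ | 0 < ε ∧ μ {t | ε ≤ |f t - (0 : Ω → ℝ) t|} ≤ ENNReal.ofReal ε} :=
    ⟨0, fun x hx => hx.1.le⟩
  have hdm' : sInf {ε : ℝ | 0 < ε ∧ μ {t | ε ≤ |f t - (0 : Ω → ℝ) t|} ≤ ENNReal.ofReal ε} < δ :=
    hdm
  obtain ⟨ε', ⟨hε'pos, hε'μ⟩, hε'δ⟩ := (csInf_lt_iff hSbdd hSne).mp hdm'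
  simp only [Pi.zero_apply, sub_zero] at hε'μ
  -- measurable representatives
  set fm := hf.1.mk f with hfmdef
  have hffm : f =ᵐ[μ] fm := hf.1.ae_eq_mk
  have hfmS : StronglyMeasurable fm := hf.1.stronglyMeasurable_mk
  have hfmI : Integrable fm μ := hf.congr hffm
  set gm := hgI.1.mk g with hgmdef
  have hggm : g =ᵐ[μ] gm := hgI.1.ae_eq_mk
  have hgmS : StronglyMeasurable gm := hgI.1.stronglyMeasurable_mk
  have hgmI : Integrable gm μ := hgI.congr hggm
  set A : Set Ω := {t | ε' ≤ |fm t|} with hAdef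
  have hAmeas : MeasurableSet A := measurableSet_le measurable_const hfmS.measurable.abs
  set B : Set Ω := {t | M ≤ |gm t|} with hBdef
  have hBmeas : MeasurableSet B := measurableSet_le measurable_const hgmS.measurable.abs
  have hAμ : μ A ≤ ENNReal.ofReal ε' := by
    have hsets : {t | ε' ≤ |f t|} =ᵐ[μ] A := by
      filter_upwards [hffm] with x hx
      change (ε' ≤ |f x|) = (ε' ≤ |fm x|)
      rw [hx]
    rw [← measure_congr hsets]; exact hε'μ
  -- uniform integrability bound for gm on B
  have hB : ∫ t in B, |gm t| ∂μ ≤ ε / 4 := by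
    have h1 : ∫ t in B, |gm t| ∂μ ≤ ∫ t in {t | M0 ≤ |gm t|}, |gm t| ∂μ := by
      apply setIntegral_mono_set (hgmI.abs.integrableOn)
        (Filter.Eventually.of_forall fun x => abs_nonneg _)
      exact Filter.Eventually.of_forall fun x hx => le_trans hM0M hx
    have h2 : ∫ t in {t | M0 ≤ |gm t|}, |gm t| ∂μ = ∫ t in {t | M0 ≤ |g t|}, |g t| ∂μ := by
      have hsets : ({t | M0 ≤ |gm t|} : Set Ω) =ᵐ[μ] {t | M0 ≤ |g t|} := by
        filter_upwards [hggm] with x hx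
        change (M0 ≤ |gm x|) = (M0 ≤ |g x|)
        rw [hx]
      rw [setIntegral_congr_set hsets]
      have hae : (fun a => |gm a|) =ᵐ[μ.restrict {t | M0 ≤ |g t|}] fun a => |g a| :=
        ae_restrict_of_ae (hggm.mono fun x hx => by show |gm x| = |g x|; rw [hx])
      exact integral_congr_ae hae
    calc ∫ t in B, |gm t| ∂μ ≤ ∫ t in {t | M0 ≤ |g t|}, |g t| ∂μ := h1.trans h2.le
      _ ≤ ε / 4 := hM0 g hg
  -- pointwise lower bounds
  have hAc_bound : ∫ t in Aᶜ, |fm t| ∂μ ≤ ε' * mΩ := by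
    have : ∫ t in Aᶜ, |fm t| ∂μ ≤ ∫ _ in Aᶜ, ε' ∂μ := by
      apply setIntegral_mono_on hfmI.abs.integrableOn (integrableOn_const (measure_lt_top μ _).ne)
        hAmeas.compl
      intro x hx
      have hx' : ¬ ε' ≤ |fm x| := hx
      exact (not_le.mp hx').le
    rw [setIntegral_const, smul_eq_mul] at this
    refine this.trans ?_
    rw [mul_comm]
    gcongr
    exact ENNReal.toReal_mono (measure_ne_top μ _) (measure_mono (Set.subset_univ _))
  have hAg_bound : ∫ t in A, |gm t| ∂μ ≤ ε / 4 + M * ε' := by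
    have hsplit : ∫ t in A ∩ B, |gm t| ∂μ + ∫ t in A \ B, |gm t| ∂μ = ∫ t in A, |gm t| ∂μ :=
      integral_inter_add_diff hBmeas hgmI.abs.integrableOn
    have h1 : ∫ t in A ∩ B, |gm t| ∂μ ≤ ∫ t in B, |gm t| ∂μ := by
      apply setIntegral_mono_set hgmI.abs.integrableOn
        (Filter.Eventually.of_forall fun x => abs_nonneg _)
      exact Filter.Eventually.of_forall fun x hx => hx.2
    have h2 : ∫ t in A \ B, |gm t| ∂μ ≤ M * ε' := by
      have hb : ∫ t in A \ B, |gm t| ∂μ ≤ ∫ _ in A \ B, M ∂μ := by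
        apply setIntegral_mono_on hgmI.abs.integrableOn
          (integrableOn_const (measure_lt_top μ _).ne) (hAmeas.diff hBmeas)
        intro x hx
        have hx' : ¬ M ≤ |gm x| := hx.2
        exact (not_le.mp hx').le
      rw [setIntegral_const, smul_eq_mul] at hb
      refine hb.trans ?_
      have hμd : (μ (A \ B)).toReal ≤ ε' := by
        have := (measure_mono (Set.diff_subset : A \ B ⊆ A)).trans hAμ
        calc (μ (A \ B)).toReal ≤ (ENNReal.ofReal ε').toReal :=
              ENNReal.toReal_mono ENNReal.ofReal_ne_top this
          _ = ε' := ENNReal.toReal_ofReal hε'pos.le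
      have hmm : (μ (A \ B)).toReal * M ≤ ε' * M :=
        mul_le_mul_of_nonneg_right hμd (by linarith)
      change (μ (A \ B)).toReal * M ≤ M * ε'
      linarith
    linarith
  -- main estimate
  have hSI : Integrable (fun t => |fm t + gm t|) μ := (hfmI.add hgmI).abs
  have hlow1 : ∫ t in A, |fm t| ∂μ - ∫ t in A, |gm t| ∂μ ≤ ∫ t in A, |fm t + gm t| ∂μ := by
    rw [← integral_sub hfmI.abs.integrableOn hgmI.abs.integrableOn]
    apply setIntegral_mono_on ((hfmI.abs.sub hgmI.abs).integrableOn) hSI.integrableOn hAmeas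
    intro x _
    simp only [Pi.sub_apply]
    have h := abs_add_le (fm x + gm x) (-(gm x))
    simp only [add_neg_cancel_right, abs_neg] at h
    linarith
  have hlow2 : ∫ t in Aᶜ, |gm t| ∂μ - ∫ t in Aᶜ, |fm t| ∂μ ≤ ∫ t in Aᶜ, |fm t + gm t| ∂μ := by
    rw [← integral_sub hgmI.abs.integrableOn hfmI.abs.integrableOn]
    apply setIntegral_mono_on ((hgmI.abs.sub hfmI.abs).integrableOn) hSI.integrableOn hAmeas.compl
    intro x _
    simp only [Pi.sub_apply]
    have h := abs_add_le (fm x + gm x) (-(fm x))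
    have h2 : fm x + gm x + -(fm x) = gm x := by ring
    rw [h2, abs_neg] at h
    linarith
  have hsum : ∫ t in A, |fm t + gm t| ∂μ + ∫ t in Aᶜ, |fm t + gm t| ∂μ
      = ∫ t, |fm t + gm t| ∂μ := integral_add_compl hAmeas hSI
  have hfsplit : ∫ t in A, |fm t| ∂μ + ∫ t in Aᶜ, |fm t| ∂μ = ∫ t, |fm t| ∂μ :=
    integral_add_compl hAmeas hfmI.abs
  have hgsplit : ∫ t in A, |gm t| ∂μ + ∫ t in Aᶜ, |gm t| ∂μ = ∫ t, |gm t| ∂μ :=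
    integral_add_compl hAmeas hgmI.abs
  have he1 : ∫ t, |f t| ∂μ = ∫ t, |fm t| ∂μ :=
    integral_congr_ae (hffm.mono fun x hx => by show |f x| = |fm x|; rw [hx])
  have he2 : ∫ t, |g t| ∂μ = ∫ t, |gm t| ∂μ :=
    integral_congr_ae (hggm.mono fun x hx => by show |g x| = |gm x|; rw [hx])
  have he3 : ∫ t, |f t + g t| ∂μ = ∫ t, |fm t + gm t| ∂μ := by
    apply integral_congr_ae
    filter_upwards [hffm, hggm] with x hx1 hx2
    rw [hx1, hx2]
  rw [he1, he2, he3]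
  have hδε : δ * (4 * (mΩ + M + 1)) = ε := by
    rw [hδdef]
    field_simp
  have key : ε' * (mΩ + M + 1) ≤ δ * (mΩ + M + 1) :=
    mul_le_mul_of_nonneg_right hε'δ.le (by linarith)
  nlinarith [key, hδε, hε'pos]
end

section
/- Let X be a Banach space, x* ∈ S_{X*}, β > 0, ε > 0, α > 0, and suppose B_X = closure(conv({(x+y)/2 : x, y ∈ B_X, ‖x−y‖ ≥ α−ε})). Then the slice S(B_X, x*, β) contains two points u, v with ‖u−v‖ ≥ α−ε. -/
open Metric Set

theorem stmt18 {X : Type*} [NormedAddCommGroup X] [NormedSpace ℝ X] [CompleteSpace X]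
    (f : X →L[ℝ] ℝ) (hf : ‖f‖ = 1) (β ε α : ℝ) (hβ : 0 < β) (hε : 0 < ε) (hα : 0 < α)
    (h : Metric.closedBall (0:X) 1 = closure (convexHull ℝ (midSet X (α - ε)))) :
    ∃ u ∈ {x ∈ Metric.closedBall (0:X) 1 | 1 - β < f x},
      ∃ v ∈ {x ∈ Metric.closedBall (0:X) 1 | 1 - β < f x},
        α - ε ≤ ‖u - v‖ := by
  have hmid : ∃ z ∈ midSet X (α - ε), 1 - β/2 < f z := by
    by_contra hc
    push_neg at hc
    have hsub : midSet X (α - ε) ⊆ {x : X | f x ≤ 1 - β/2} := fun z hz => hc z hz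
    have hconv : Convex ℝ {x : X | f x ≤ 1 - β/2} :=
      convex_halfSpace_le ⟨f.map_add, f.map_smul⟩ _
    have hcl : IsClosed {x : X | f x ≤ 1 - β/2} := isClosed_le f.continuous continuous_const
    have hball : Metric.closedBall (0:X) 1 ⊆ {x : X | f x ≤ 1 - β/2} := by
      rw [h]
      exact closure_minimal (convexHull_min hsub hconv) hcl
    have h1 : (1 : ℝ) - β/2 < ‖f‖ := by rw [hf]; linarith
    obtain ⟨x, hx1, hx2⟩ := f.exists_lt_apply_of_lt_opNorm h1
    have hxb : x ∈ Metric.closedBall (0:X) 1 := by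
      rw [Metric.mem_closedBall, dist_zero_right]; linarith
    have hxb' : -x ∈ Metric.closedBall (0:X) 1 := by
      rw [Metric.mem_closedBall, dist_zero_right, norm_neg]; linarith
    have h2 := hball hxb
    have h3 := hball hxb'
    simp only [Set.mem_setOf_eq, map_neg] at h2 h3
    rw [Real.norm_eq_abs] at hx2
    rcases abs_cases (f x) with ⟨he, _⟩ | ⟨he, _⟩ <;> linarith
  obtain ⟨z, ⟨x, hx, y, hy, hxy, rfl⟩, hfz⟩ := hmid
  have hfz' : f ((2:ℝ)⁻¹ • (x + y)) = 2⁻¹ * (f x + f y) := by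
    rw [map_smul, smul_eq_mul, map_add]
  rw [hfz'] at hfz
  have hfx : f x ≤ 1 := by
    have h1 := f.le_opNorm x
    rw [hf, one_mul, Real.norm_eq_abs] at h1
    rw [mem_closedBall, dist_zero_right] at hx
    have h2 : f x ≤ |f x| := le_abs_self _
    linarith
  have hfy : f y ≤ 1 := by
    have h1 := f.le_opNorm y
    rw [hf, one_mul, Real.norm_eq_abs] at h1
    rw [mem_closedBall, dist_zero_right] at hy
    have h2 : f y ≤ |f y| := le_abs_self _
    linarith
  exact ⟨x, ⟨hx, by linarith⟩, y, ⟨hy, by linarith⟩, hxy⟩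
end
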